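/- Let (M,⊗,1,σ) be a braided monoidal category with equalizers and coequalizers that are preserved by the functors X⊗(−) and (−)⊗X for every object X. Given parallel morphisms f,g: A→B in Hopf(M), define φ_f := m_B(m_B⊗Id_B)(Id_B⊗f⊗Id_B) and φ_g := m_B(m_B⊗Id_B)(Id_B⊗g⊗Id_B): B⊗A⊗B→B, and let π: B→Coeq(φ_f,φ_g) be the coequalizer of (φ_f,φ_g) in M. Then Coeq(φ_f,φ_g) carries a unique Hopf monoid structure such that π is a morphism in Hopf(M), and (Coeq(φ_f,φ_g), π) is the coequalizer of the pair (f,g) in Hopf(M). The same holds in Hopf_coc(M) when f and g are morphisms of cocommutative Hopf monoids. In particular, the cokernel of f: A→B in Hopf(M) is given by the coequalizer in M of the pair (m_B(m_B⊗Id_B)(Id_B⊗f⊗Id_B), m_B(Id_B⊗ε_A⊗Id_B)). -/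

import Mathlib

/-!
Common infrastructure for formalizing results on cocommutative Hopf monoids
in (abelian) symmetric monoidal categories.
-/

open CategoryTheory MonoidalCategory CategoryTheory.Limits

universe v u

namespace HopfSemiabelian

variable {C : Type u} [Category.{v} C] [MonoidalCategory.{v} C]

section HopfBasics
variable [BraidedCategory C]

/-- The underlying object in `C` of a Hopf monoid. -/
abbrev hCar (H : Hopf C) : C := H.X
/-- The multiplication of a Hopf monoid. -/
abbrev hMul (H : Hopf C) : hCar H ⊗ hCar H ⟶ hCar H := MonObj.mul
/-- The unit of a Hopf monoid. -/
abbrev hOne (H : Hopf C) : 𝟙_ C ⟶ hCar H := MonObj.one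
/-- The comultiplication of a Hopf monoid. -/
abbrev hComul (H : Hopf C) : hCar H ⟶ hCar H ⊗ hCar H := ComonObj.comul
/-- The counit of a Hopf monoid. -/
abbrev hCounit (H : Hopf C) : hCar H ⟶ 𝟙_ C := ComonObj.counit
/-- The antipode of a Hopf monoid. -/
abbrev hS (H : Hopf C) : hCar H ⟶ hCar H := HopfObj.antipode

/-- The underlying comonoid in `C` of a Hopf monoid. -/
def hComon (H : Hopf C) : Comon C where
  X := hCar H

/-- The underlying monoid of a Hopf monoid. -/
abbrev hMon (H : Hopf C) : Mon C := { X := hCar H }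

/-- A Hopf monoid is cocommutative if `σ ∘ Δ = Δ`. -/
def IsCocomm (H : Hopf C) : Prop := hComul H ≫ (β_ (hCar H) (hCar H)).hom = hComul H

variable (C) in
/-- `Hopf_coc(M)`: the category of cocommutative Hopf monoids in `C`,
as a full subcategory of `Hopf_ C` (morphisms are bimonoid morphisms). -/
def HopfCoc := ObjectProperty.FullSubcategory (fun H : Hopf C => IsCocomm H)

instance : Category (HopfCoc C) := ObjectProperty.FullSubcategory.category _

/-- The underlying morphism in `C` of a morphism of cocommutative Hopf monoids. -/
def uhom {K A : HopfCoc C} (f : K ⟶ A) : hCar K.obj ⟶ hCar A.obj := f.hom.hom.hom.hom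

/-- The underlying morphism in `C` of a morphism of Hopf monoids. -/
def uhomH {K A : Hopf C} (f : K ⟶ A) : hCar K ⟶ hCar A := f.hom.hom.hom

/-- The zero morphism between two Hopf monoids (factoring through the trivial one). -/
def hzero (A B : Hopf C) : A ⟶ B :=
  InducedCategory.homMk (Bimon.toTrivial A.toBimon ≫ Bimon.trivialTo B.toBimon)

/-- The zero morphism between two cocommutative Hopf monoids. -/
def zeroH (A B : HopfCoc C) : A ⟶ B := InducedCategory.homMk (hzero A.obj B.obj)

end HopfBasics

section StructuresOnObjects

/-- A comonoid structure on a fixed object `Y` of `C`. -/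
structure ComonStructOn (Y : C) where
  counit : Y ⟶ 𝟙_ C
  comul : Y ⟶ Y ⊗ Y
  counit_comul : comul ≫ (counit ▷ Y) = (λ_ Y).inv
  comul_counit : comul ≫ (Y ◁ counit) = (ρ_ Y).inv
  comul_assoc : comul ≫ (Y ◁ comul) = comul ≫ (comul ▷ Y) ≫ (α_ Y Y Y).hom

variable [BraidedCategory C]

/-- A cocommutative comonoid structure on a fixed object `Y` of `C`. -/
structure CocommComonStructOn (Y : C) extends ComonStructOn Y where
  cocomm : comul ≫ (β_ Y Y).hom = comul

/-- A Hopf monoid structure on a fixed object `Y` of `C`. -/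
structure HopfStructOn (Y : C) extends ComonStructOn Y where
  mul : Y ⊗ Y ⟶ Y
  one : 𝟙_ C ⟶ Y
  one_mul : (one ▷ Y) ≫ mul = (λ_ Y).hom
  mul_one : (Y ◁ one) ≫ mul = (ρ_ Y).hom
  mul_assoc : (mul ▷ Y) ≫ mul = (α_ Y Y Y).hom ≫ (Y ◁ mul) ≫ mul
  mul_comul : mul ≫ comul = (comul ⊗ₘ comul) ≫ tensorμ Y Y Y Y ≫ (mul ⊗ₘ mul)
  one_comul : one ≫ comul = (λ_ (𝟙_ C)).inv ≫ (one ⊗ₘ one)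
  mul_counit : mul ≫ counit = (counit ⊗ₘ counit) ≫ (λ_ (𝟙_ C)).hom
  one_counit : one ≫ counit = 𝟙 (𝟙_ C)
  antipode : Y ⟶ Y
  antipode_left : comul ≫ (antipode ▷ Y) ≫ mul = counit ≫ one
  antipode_right : comul ≫ (Y ◁ antipode) ≫ mul = counit ≫ one

/-- A cocommutative Hopf monoid structure on a fixed object `Y` of `C`. -/
structure CocommHopfStructOn (Y : C) extends HopfStructOn Y where
  cocomm : comul ≫ (β_ Y Y).hom = comul

end StructuresOnObjects

section PhiHopf
variable [BraidedCategory C]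

/-- `φ_f = m_B(m_B ⊗ Id_B)(Id_B ⊗ f ⊗ Id_B) : (B ⊗ A) ⊗ B ⟶ B`. -/
def phiHopf {A B : Hopf C} (f : A ⟶ B) : (hCar B ⊗ hCar A) ⊗ hCar B ⟶ hCar B :=
  ((hCar B ◁ uhomH f) ▷ hCar B) ≫ (hMul B ▷ hCar B) ≫ hMul B

/-- `m_B(Id_B ⊗ ε_A ⊗ Id_B) : (B ⊗ A) ⊗ B ⟶ B`. -/
def phiHopfEps (A B : Hopf C) : (hCar B ⊗ hCar A) ⊗ hCar B ⟶ hCar B :=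
  ((hCar B ◁ hCounit A) ▷ hCar B) ≫ ((ρ_ (hCar B)).hom ▷ hCar B) ≫ hMul B

end PhiHopf
set_option linter.unusedSectionVars false
section Compat

theorem tensor_comp {X₁ Y₁ Z₁ X₂ Y₂ Z₂ : C} (f₁ : X₁ ⟶ Y₁) (f₂ : X₂ ⟶ Y₂) (g₁ : Y₁ ⟶ Z₁)
    (g₂ : Y₂ ⟶ Z₂) : (f₁ ≫ g₁) ⊗ₘ (f₂ ≫ g₂) = (f₁ ⊗ₘ f₂) ≫ (g₁ ⊗ₘ g₂) :=
  (tensorHom_comp_tensorHom _ _ _ _).symm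

theorem tensor_comp_assoc {X₁ Y₁ Z₁ X₂ Y₂ Z₂ W : C} (f₁ : X₁ ⟶ Y₁) (f₂ : X₂ ⟶ Y₂) (g₁ : Y₁ ⟶ Z₁)
    (g₂ : Y₂ ⟶ Z₂) (h : Z₁ ⊗ Z₂ ⟶ W) :
    ((f₁ ≫ g₁) ⊗ₘ (f₂ ≫ g₂)) ≫ h = (f₁ ⊗ₘ f₂) ≫ (g₁ ⊗ₘ g₂) ≫ h := by
  rw [tensor_comp, Category.assoc]

variable [BraidedCategory C]

theorem hopfHom_counit {A B : Hopf C} (f : A ⟶ B) : uhomH f ≫ hCounit B = hCounit A :=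
  congrArg Mon.Hom.hom f.hom.isComonHom_hom.hom_counit

theorem hopfHom_comul {A B : Hopf C} (f : A ⟶ B) :
    uhomH f ≫ hComul B = hComul A ≫ (uhomH f ⊗ₘ uhomH f) :=
  congrArg Mon.Hom.hom f.hom.isComonHom_hom.hom_comul

theorem uhomH_mul {A B : Hopf C} (f : A ⟶ B) :
    hMul A ≫ uhomH f = (uhomH f ⊗ₘ uhomH f) ≫ hMul B :=
  IsMonHom.mul_hom f.hom.hom.hom

theorem uhomH_one {A B : Hopf C} (f : A ⟶ B) : hOne A ≫ uhomH f = hOne B :=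
  IsMonHom.one_hom f.hom.hom.hom

theorem uhomH_counit {A B : Hopf C} (f : A ⟶ B) : uhomH f ≫ hCounit B = hCounit A :=
  hopfHom_counit f

theorem uhomH_comul {A B : Hopf C} (f : A ⟶ B) :
    uhomH f ≫ hComul B = hComul A ≫ (uhomH f ⊗ₘ uhomH f) :=
  hopfHom_comul f

instance uhomH_isBimonHom {A B : Hopf C} (f : A ⟶ B) : IsBimonHom (uhomH f) where
  one_hom := uhomH_one f
  mul_hom := uhomH_mul f
  hom_counit := uhomH_counit f
  hom_comul := uhomH_comul f

theorem hopfHom_antipode {A B : Hopf C} (f : A ⟶ B) :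
    uhomH f ≫ hS B = hS A ≫ uhomH f :=
  HopfObj.hom_antipode (uhomH f)

/-- A morphism of Hopf monoids from a bimonoid morphism in `C`. -/
def hopfHomMk {A B : Hopf C} (h : A.X ⟶ B.X) [hh : IsBimonHom h] : A ⟶ B :=
  InducedCategory.homMk (Comon.Hom.mk' (Mon.Hom.mk' h (IsMonHom.one_hom h) (IsMonHom.mul_hom h))
    (Mon.Hom.ext (IsComonHom.hom_counit h)) (Mon.Hom.ext (IsComonHom.hom_comul h)))

theorem hopf_ext {A B : Hopf C} {f g : A ⟶ B} (w : uhomH f = uhomH g) : f = g :=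
  InducedCategory.hom_ext (Bimon.ext w)

end Compat
section Aux
variable [BraidedCategory C]

/-- A morphism that is the coequalizer of some parallel pair. -/
def IsCoeqπ {X Y : C} (h : X ⟶ Y) : Prop :=
  ∃ (Z : C) (a b : Z ⟶ X) (w : a ≫ h = b ≫ h), Nonempty (IsColimit (Cofork.ofπ h w))

theorem IsCoeqπ.epi {X Y : C} {h : X ⟶ Y} (hc : IsCoeqπ h) : Epi h := by
  obtain ⟨Z, a, b, w, ⟨l⟩⟩ := hc
  exact ⟨fun u v e => Cofork.IsColimit.hom_ext l (by simpa using e)⟩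

theorem IsCoeqπ.whiskerLeft
    [∀ X : C, PreservesColimitsOfShape WalkingParallelPair (tensorLeft X)]
    (X : C) {Y Z : C} {h : Y ⟶ Z} (hc : IsCoeqπ h) : IsCoeqπ (X ◁ h) := by
  obtain ⟨W, a, b, w, ⟨l⟩⟩ := hc
  exact ⟨X ⊗ W, X ◁ a, X ◁ b,
    by rw [← MonoidalCategory.whiskerLeft_comp, ← MonoidalCategory.whiskerLeft_comp, w],
    ⟨isColimitCoforkMapOfIsColimit (tensorLeft X) w l⟩⟩

theorem IsCoeqπ.whiskerRight
    [∀ X : C, PreservesColimitsOfShape WalkingParallelPair (tensorRight X)]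
    (X : C) {Y Z : C} {h : Y ⟶ Z} (hc : IsCoeqπ h) : IsCoeqπ (h ▷ X) := by
  obtain ⟨W, a, b, w, ⟨l⟩⟩ := hc
  exact ⟨W ⊗ X, a ▷ X, b ▷ X,
    by rw [← comp_whiskerRight, ← comp_whiskerRight, w],
    ⟨isColimitCoforkMapOfIsColimit (tensorRight X) w l⟩⟩

theorem phi_comp' {A B : Hopf C} (h : A ⟶ B) {T : C} (mT : T ⊗ T ⟶ T) (t : hCar B ⟶ T)
    (ht : hMul B ≫ t = (t ⊗ₘ t) ≫ mT) :
    phiHopf h ≫ t = ((t ⊗ₘ (uhomH h ≫ t)) ⊗ₘ t) ≫ (mT ▷ T) ≫ mT := by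
  have e1 : (hMul B ▷ hCar B) ≫ (t ⊗ₘ t) = ((t ⊗ₘ t) ⊗ₘ t) ≫ (mT ▷ T) := by
    rw [← tensorHom_id, ← tensorHom_id, ← tensor_comp, ← tensor_comp, ht]
    simp only [Category.id_comp, Category.comp_id]
  have e2 : ((hCar B ◁ uhomH h) ▷ hCar B) ≫ ((t ⊗ₘ t) ⊗ₘ t) = (t ⊗ₘ (uhomH h ≫ t)) ⊗ₘ t := by
    rw [← id_tensorHom, ← tensorHom_id, ← tensor_comp, ← tensor_comp]
    simp only [Category.id_comp, Category.comp_id]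
  simp only [phiHopf, Category.assoc]
  rw [ht, reassoc_of% e1, reassoc_of% e2]

theorem phi_coeq_of {A B : Hopf C} (f g : A ⟶ B) {T : C} (mT : T ⊗ T ⟶ T) (t : hCar B ⟶ T)
    (ht : hMul B ≫ t = (t ⊗ₘ t) ≫ mT) (hfg : uhomH f ≫ t = uhomH g ≫ t) :
    phiHopf f ≫ t = phiHopf g ≫ t := by
  rw [phi_comp' f mT t ht, phi_comp' g mT t ht, hfg]

end Aux

section Aux2
set_option linter.unusedSectionVars false
variable [BraidedCategory C]

theorem mul_phi_right {A B : Hopf C} (h : A ⟶ B) :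
    (phiHopf h ▷ hCar B) ≫ hMul B =
      (α_ (hCar B ⊗ hCar A) (hCar B) (hCar B)).hom ≫ ((hCar B ⊗ hCar A) ◁ hMul B) ≫
        phiHopf h := by
  simp only [phiHopf, comp_whiskerRight, Category.assoc]
  slice_rhs 2 3 => rw [whisker_exchange]
  slice_rhs 3 4 => rw [whisker_exchange]
  slice_rhs 1 2 => rw [← associator_naturality_left]
  slice_rhs 2 3 => rw [← associator_naturality_left]
  slice_lhs 3 4 => rw [MonObj.mul_assoc]
  simp only [Category.assoc]

theorem mul_phi_left {A B : Hopf C} (h : A ⟶ B) :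
    (hCar B ◁ phiHopf h) ≫ hMul B =
      (α_ (hCar B) (hCar B ⊗ hCar A) (hCar B)).inv ≫
        ((α_ (hCar B) (hCar B) (hCar A)).inv ▷ hCar B) ≫
        ((hMul B ▷ hCar A) ▷ hCar B) ≫ phiHopf h := by
  simp only [phiHopf, MonoidalCategory.whiskerLeft_comp, Category.assoc]
  slice_lhs 3 4 => rw [MonObj.mul_assoc_flip]
  slice_lhs 2 3 => rw [associator_inv_naturality_middle]
  slice_lhs 3 4 => rw [← comp_whiskerRight, MonObj.mul_assoc_flip]
  simp only [comp_whiskerRight, Category.assoc]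
  slice_lhs 1 2 => rw [associator_inv_naturality_middle]
  slice_lhs 2 3 => rw [← comp_whiskerRight, associator_inv_naturality_right, comp_whiskerRight]
  slice_rhs 3 4 => rw [← comp_whiskerRight, ← whisker_exchange, comp_whiskerRight]
  simp only [Category.assoc]

theorem iota_phi {A B : Hopf C} (h : A ⟶ B) :
    ((λ_ (hCar A)).inv ≫ (hOne B ▷ hCar A) ≫ (ρ_ (hCar B ⊗ hCar A)).inv ≫
      ((hCar B ⊗ hCar A) ◁ hOne B)) ≫ phiHopf h = uhomH h := by
  simp only [phiHopf, Category.assoc]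
  slice_lhs 4 5 => rw [whisker_exchange]
  slice_lhs 5 6 => rw [whisker_exchange]
  slice_lhs 6 7 => rw [MonObj.mul_one]
  slice_lhs 3 4 => rw [← rightUnitor_inv_naturality]
  slice_lhs 4 5 => rw [← rightUnitor_inv_naturality]
  slice_lhs 5 6 => rw [Iso.inv_hom_id]
  simp only [Category.comp_id, Category.id_comp]
  slice_lhs 2 3 => rw [← whisker_exchange]
  slice_lhs 3 4 => rw [MonObj.one_mul]
  slice_lhs 1 2 => rw [← leftUnitor_inv_naturality]
  simp

end Aux2
section Build
set_option linter.unusedSectionVars false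
variable [BraidedCategory C] [HasCoequalizers C]
  [∀ X : C, PreservesColimitsOfShape WalkingParallelPair (tensorLeft X)]
  [∀ X : C, PreservesColimitsOfShape WalkingParallelPair (tensorRight X)]
variable {A B : Hopf C} (f g : A ⟶ B)

/-- The coequalizer object in `C`. -/
noncomputable abbrev Qc : C := coequalizer (phiHopf f) (phiHopf g)
/-- The projection. -/
noncomputable abbrev π0 : hCar B ⟶ Qc f g := coequalizer.π _ _

theorem wfg : phiHopf f ≫ π0 f g = phiHopf g ≫ π0 f g := coequalizer.condition _ _

theorem uhomH_def {K L : Hopf C} (t : K ⟶ L) : uhomH t = t.hom.hom.hom := rfl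

theorem isCoeq_π0 : IsCoeqπ (π0 f g) :=
  ⟨_, _, _, coequalizer.condition _ _, ⟨coequalizerIsCoequalizer _ _⟩⟩

/-- Whiskered coequalizer (left). -/
noncomputable def colimL (X : C) :
    IsColimit (Cofork.ofπ (X ◁ π0 f g)
      (by rw [← MonoidalCategory.whiskerLeft_comp, ← MonoidalCategory.whiskerLeft_comp, wfg]) :
      Cofork (X ◁ phiHopf f) (X ◁ phiHopf g)) :=
  isColimitCoforkMapOfIsColimit (tensorLeft X) (wfg f g) (coequalizerIsCoequalizer _ _)

/-- Whiskered coequalizer (right). -/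
noncomputable def colimR (X : C) :
    IsColimit (Cofork.ofπ (π0 f g ▷ X)
      (by rw [← comp_whiskerRight, ← comp_whiskerRight, wfg]) :
      Cofork (phiHopf f ▷ X) (phiHopf g ▷ X)) :=
  isColimitCoforkMapOfIsColimit (tensorRight X) (wfg f g) (coequalizerIsCoequalizer _ _)

theorem mul_w1 : (hCar B ◁ phiHopf f) ≫ (hMul B ≫ π0 f g)
    = (hCar B ◁ phiHopf g) ≫ (hMul B ≫ π0 f g) := by
  rw [← Category.assoc, mul_phi_left, ← Category.assoc (hCar B ◁ phiHopf g), mul_phi_left]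
  simp only [Category.assoc]
  rw [wfg]

/-- Multiplication, partially descended. -/
noncomputable def mul1 : hCar B ⊗ Qc f g ⟶ Qc f g :=
  Cofork.IsColimit.desc (colimL f g (hCar B)) (hMul B ≫ π0 f g) (mul_w1 f g)

theorem mul1_fac : (hCar B ◁ π0 f g) ≫ mul1 f g = hMul B ≫ π0 f g := by
  exact Cofork.IsColimit.π_desc (colimL f g (hCar B))

theorem mul_w2 : (phiHopf f ▷ Qc f g) ≫ mul1 f g = (phiHopf g ▷ Qc f g) ≫ mul1 f g := by
  haveI : Epi (((hCar B ⊗ hCar A) ⊗ hCar B) ◁ π0 f g) :=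
    ((isCoeq_π0 f g).whiskerLeft _).epi
  rw [← cancel_epi (((hCar B ⊗ hCar A) ⊗ hCar B) ◁ π0 f g)]
  rw [whisker_exchange_assoc, whisker_exchange_assoc, mul1_fac]
  rw [← Category.assoc, mul_phi_right, ← Category.assoc (phiHopf g ▷ hCar B), mul_phi_right]
  simp only [Category.assoc]
  rw [wfg]

/-- Multiplication on the coequalizer. -/
noncomputable def mulQ : Qc f g ⊗ Qc f g ⟶ Qc f g :=
  Cofork.IsColimit.desc (colimR f g (Qc f g)) (mul1 f g) (mul_w2 f g)

theorem mulQ_fac : (π0 f g ▷ Qc f g) ≫ mulQ f g = mul1 f g := by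
  exact Cofork.IsColimit.π_desc (colimR f g (Qc f g))

theorem pi_mul : (π0 f g ⊗ₘ π0 f g) ≫ mulQ f g = hMul B ≫ π0 f g := by
  rw [tensorHom_def', Category.assoc, mulQ_fac, mul1_fac]

/-- Unit on the coequalizer. -/
noncomputable def oneQ : 𝟙_ C ⟶ Qc f g := hOne B ≫ π0 f g

theorem counit_w : phiHopf f ≫ hCounit B = phiHopf g ≫ hCounit B :=
  phi_coeq_of f g (λ_ (𝟙_ C)).hom (hCounit B) (Bimon.mul_counit B.X)
    (by
        rw [hopfHom_counit f, hopfHom_counit g])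

/-- Counit on the coequalizer. -/
noncomputable def counitQ : Qc f g ⟶ 𝟙_ C := coequalizer.desc (hCounit B) (counit_w f g)

theorem pi_counit : π0 f g ≫ counitQ f g = hCounit B := coequalizer.π_desc _ _

theorem pi_fg : uhomH f ≫ π0 f g = uhomH g ≫ π0 f g := by
  rw [← iota_phi f, ← iota_phi g]
  simp only [Category.assoc]
  rw [wfg]

theorem mulcomul_B : hMul B ≫ hComul B
    = (hComul B ⊗ₘ hComul B) ≫ tensorμ _ _ _ _ ≫ (hMul B ⊗ₘ hMul B) := by
  exact BimonObj.mul_comul B.X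

theorem comul_w : phiHopf f ≫ (hComul B ≫ (π0 f g ⊗ₘ π0 f g))
    = phiHopf g ≫ (hComul B ≫ (π0 f g ⊗ₘ π0 f g)) := by
  refine phi_coeq_of f g (tensorμ _ _ _ _ ≫ (mulQ f g ⊗ₘ mulQ f g)) _ ?_ ?_
  · rw [reassoc_of% (mulcomul_B (B := B)), ← tensor_comp, ← pi_mul f g, tensor_comp,
      ← tensorμ_natural_assoc, ← tensor_comp_assoc]
  · rw [← Category.assoc, hopfHom_comul f, ← Category.assoc,
      hopfHom_comul g, Category.assoc, Category.assoc, ← tensor_comp]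
    have := pi_fg f g
    rw [this, tensor_comp]


/-- Comultiplication on the coequalizer. -/
noncomputable def comulQ : Qc f g ⟶ Qc f g ⊗ Qc f g :=
  coequalizer.desc (hComul B ≫ (π0 f g ⊗ₘ π0 f g)) (comul_w f g)

theorem pi_comul : π0 f g ≫ comulQ f g = hComul B ≫ (π0 f g ⊗ₘ π0 f g) :=
  coequalizer.π_desc _ _

theorem S_w : phiHopf f ≫ (hS B ≫ π0 f g) = phiHopf g ≫ (hS B ≫ π0 f g) := by
  refine phi_coeq_of f g ((β_ _ _).hom ≫ mulQ f g) _ ?_ ?_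
  · rw [reassoc_of% (HopfObj.mul_antipode B.X), ← pi_mul f g,
      BraidedCategory.braiding_naturality_assoc, ← tensor_comp_assoc,
      BraidedCategory.braiding_naturality_assoc]
  · rw [reassoc_of% (hopfHom_antipode f), reassoc_of% (hopfHom_antipode g)]
    have := pi_fg f g
    rw [this]

/-- Antipode on the coequalizer. -/
noncomputable def SQ : Qc f g ⟶ Qc f g := coequalizer.desc (hS B ≫ π0 f g) (S_w f g)

theorem pi_S : π0 f g ≫ SQ f g = hS B ≫ π0 f g := coequalizer.π_desc _ _

end Build
section Build2
set_option linter.unusedSectionVars false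
variable [BraidedCategory C] [HasCoequalizers C]
  [∀ X : C, PreservesColimitsOfShape WalkingParallelPair (tensorLeft X)]
  [∀ X : C, PreservesColimitsOfShape WalkingParallelPair (tensorRight X)]
variable {A B : Hopf C} (f g : A ⟶ B)

theorem oneQ_def : oneQ f g = hOne B ≫ π0 f g := rfl

theorem epi_ππ : Epi (π0 f g ⊗ₘ π0 f g) := by
  haveI := ((isCoeq_π0 f g).whiskerRight (hCar B)).epi
  haveI := ((isCoeq_π0 f g).whiskerLeft (Qc f g)).epi
  rw [MonoidalCategory.tensorHom_def]
  exact epi_comp _ _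

theorem epi_πππ : Epi ((π0 f g ⊗ₘ π0 f g) ⊗ₘ π0 f g) := by
  haveI := (((isCoeq_π0 f g).whiskerRight (hCar B)).whiskerRight (hCar B)).epi
  haveI := (((isCoeq_π0 f g).whiskerLeft (Qc f g)).whiskerRight (hCar B)).epi
  haveI := ((isCoeq_π0 f g).whiskerLeft (Qc f g ⊗ Qc f g)).epi
  rw [MonoidalCategory.tensorHom_def, MonoidalCategory.tensorHom_def, comp_whiskerRight, Category.assoc]
  exact epi_comp _ _

theorem pi_mul' : (hCar B ◁ π0 f g) ≫ (π0 f g ▷ Qc f g) ≫ mulQ f g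
    = hMul B ≫ π0 f g := by
  rw [← Category.assoc, ← tensorHom_def', pi_mul]

theorem pi_mul'' : (π0 f g ▷ hCar B) ≫ (Qc f g ◁ π0 f g) ≫ mulQ f g
    = hMul B ≫ π0 f g := by
  rw [← Category.assoc, ← MonoidalCategory.tensorHom_def, pi_mul]

theorem comul_mult : hMul B ≫ (hComul B ≫ (π0 f g ⊗ₘ π0 f g))
    = ((hComul B ≫ (π0 f g ⊗ₘ π0 f g)) ⊗ₘ (hComul B ≫ (π0 f g ⊗ₘ π0 f g))) ≫
      tensorμ _ _ _ _ ≫ (mulQ f g ⊗ₘ mulQ f g) := by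
  rw [reassoc_of% (mulcomul_B (B := B)), ← tensor_comp, ← pi_mul f g, tensor_comp,
    ← tensorμ_natural_assoc, ← tensor_comp_assoc]

theorem K1 : (π0 f g ⊗ₘ π0 f g) ≫ (Qc f g ◁ comulQ f g)
    = (hCar B ◁ hComul B) ≫ (π0 f g ⊗ₘ (π0 f g ⊗ₘ π0 f g)) := by
  simp only [← id_tensorHom, ← tensorHom_id, ← tensor_comp, pi_comul,
    Category.comp_id, Category.id_comp]

theorem K2 : (π0 f g ⊗ₘ π0 f g) ≫ (comulQ f g ▷ Qc f g)
    = (hComul B ▷ hCar B) ≫ ((π0 f g ⊗ₘ π0 f g) ⊗ₘ π0 f g) := by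
  simp only [← id_tensorHom, ← tensorHom_id, ← tensor_comp, pi_comul,
    Category.comp_id, Category.id_comp]

theorem K3 : ((π0 f g ⊗ₘ π0 f g) ⊗ₘ π0 f g) ≫ (α_ (Qc f g) (Qc f g) (Qc f g)).hom
    = (α_ (hCar B) (hCar B) (hCar B)).hom ≫ (π0 f g ⊗ₘ (π0 f g ⊗ₘ π0 f g)) :=
  associator_naturality _ _ _

theorem K4 : ((π0 f g ⊗ₘ π0 f g) ⊗ₘ π0 f g) ≫ (mulQ f g ▷ Qc f g)
    = (hMul B ▷ hCar B) ≫ (π0 f g ⊗ₘ π0 f g) := by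
  simp only [← id_tensorHom, ← tensorHom_id, ← tensor_comp, pi_mul,
    Category.comp_id, Category.id_comp]

theorem K5 : (π0 f g ⊗ₘ (π0 f g ⊗ₘ π0 f g)) ≫ (Qc f g ◁ mulQ f g)
    = (hCar B ◁ hMul B) ≫ (π0 f g ⊗ₘ π0 f g) := by
  simp only [← id_tensorHom, ← tensorHom_id, ← tensor_comp, pi_mul,
    Category.comp_id, Category.id_comp]

theorem K6 : (π0 f g ⊗ₘ π0 f g) ≫ (SQ f g ▷ Qc f g)
    = (hS B ▷ hCar B) ≫ (π0 f g ⊗ₘ π0 f g) := by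
  simp only [← id_tensorHom, ← tensorHom_id, ← tensor_comp, pi_S,
    Category.comp_id, Category.id_comp]

theorem K7 : (π0 f g ⊗ₘ π0 f g) ≫ (Qc f g ◁ SQ f g)
    = (hCar B ◁ hS B) ≫ (π0 f g ⊗ₘ π0 f g) := by
  simp only [← id_tensorHom, ← tensorHom_id, ← tensor_comp, pi_S,
    Category.comp_id, Category.id_comp]

theorem K8 : (π0 f g ⊗ₘ π0 f g) ≫ (counitQ f g ▷ Qc f g)
    = (hCounit B ▷ hCar B) ≫ (𝟙_ C ◁ π0 f g) := by
  simp only [← id_tensorHom, ← tensorHom_id, ← tensor_comp, pi_counit,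
    Category.comp_id, Category.id_comp]

theorem K9 : (π0 f g ⊗ₘ π0 f g) ≫ (Qc f g ◁ counitQ f g)
    = (hCar B ◁ hCounit B) ≫ (π0 f g ▷ 𝟙_ C) := by
  simp only [← id_tensorHom, ← tensorHom_id, ← tensor_comp, pi_counit,
    Category.comp_id, Category.id_comp]

/-- The comonoid structure on the coequalizer. -/
noncomputable def comonQ : ComonStructOn (Qc f g) where
  counit := counitQ f g
  comul := comulQ f g
  counit_comul := by
    haveI := (isCoeq_π0 f g).epi
    rw [← cancel_epi (π0 f g), reassoc_of% (pi_comul f g), K8,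
      ComonObj.counit_comul_assoc, leftUnitor_inv_naturality]
  comul_counit := by
    haveI := (isCoeq_π0 f g).epi
    rw [← cancel_epi (π0 f g), reassoc_of% (pi_comul f g), K9,
      ComonObj.comul_counit_assoc, rightUnitor_inv_naturality]
  comul_assoc := by
    haveI := (isCoeq_π0 f g).epi
    rw [← cancel_epi (π0 f g), reassoc_of% (pi_comul f g), reassoc_of% (pi_comul f g),
      K1, reassoc_of% (K2 f g), K3, ComonObj.comul_assoc_assoc]

/-- The Hopf monoid structure on the coequalizer. -/
noncomputable def hopfQ : HopfStructOn (Qc f g) where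
  toComonStructOn := comonQ f g
  mul := mulQ f g
  one := oneQ f g
  one_mul := by
    haveI := ((isCoeq_π0 f g).whiskerLeft (𝟙_ C)).epi
    rw [← cancel_epi (𝟙_ C ◁ π0 f g), leftUnitor_naturality, oneQ_def,
      comp_whiskerRight]
    simp only [Category.assoc]
    rw [whisker_exchange_assoc, pi_mul', reassoc_of% (MonObj.one_mul B.X)]
  mul_one := by
    haveI := ((isCoeq_π0 f g).whiskerRight (𝟙_ C)).epi
    rw [← cancel_epi (π0 f g ▷ 𝟙_ C), rightUnitor_naturality, oneQ_def,
      MonoidalCategory.whiskerLeft_comp]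
    simp only [Category.assoc]
    rw [← whisker_exchange_assoc, pi_mul'', reassoc_of% (MonObj.mul_one B.X)]
  mul_assoc := by
    haveI := epi_πππ f g
    rw [← cancel_epi ((π0 f g ⊗ₘ π0 f g) ⊗ₘ π0 f g), reassoc_of% (K4 f g),
      reassoc_of% (K3 f g), reassoc_of% (K5 f g), pi_mul,
      MonObj.mul_assoc_assoc]
  mul_comul := by
    dsimp only [comonQ]
    haveI := epi_ππ f g
    rw [← cancel_epi (π0 f g ⊗ₘ π0 f g), reassoc_of% (pi_mul f g), pi_comul,
      ← tensor_comp_assoc, pi_comul]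
    exact comul_mult f g
  one_comul := by
    dsimp only [comonQ]
    rw [oneQ_def, Category.assoc, pi_comul, reassoc_of% (Bimon.one_comul B.X),
      ← tensor_comp]
  mul_counit := by
    dsimp only [comonQ]
    haveI := epi_ππ f g
    rw [← cancel_epi (π0 f g ⊗ₘ π0 f g), reassoc_of% (pi_mul f g), pi_counit,
      ← tensor_comp_assoc, pi_counit, Bimon.mul_counit B.X]
  one_counit := by
    dsimp only [comonQ]
    rw [oneQ_def, Category.assoc, pi_counit]
    exact BimonObj.one_counit B.X
  antipode := SQ f g
  antipode_left := by
    dsimp only [comonQ]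
    haveI := (isCoeq_π0 f g).epi
    rw [← cancel_epi (π0 f g), reassoc_of% (pi_comul f g), reassoc_of% (K6 f g),
      pi_mul, HopfObj.antipode_left_assoc, reassoc_of% (pi_counit f g), oneQ_def]
  antipode_right := by
    dsimp only [comonQ]
    haveI := (isCoeq_π0 f g).epi
    rw [← cancel_epi (π0 f g), reassoc_of% (pi_comul f g), reassoc_of% (K7 f g),
      pi_mul, HopfObj.antipode_right_assoc, reassoc_of% (pi_counit f g), oneQ_def]

end Build2
section Build3
set_option linter.unusedSectionVars false
variable [BraidedCategory C] [HasCoequalizers C]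
  [∀ X : C, PreservesColimitsOfShape WalkingParallelPair (tensorLeft X)]
  [∀ X : C, PreservesColimitsOfShape WalkingParallelPair (tensorRight X)]
variable {A B : Hopf C} (f g : A ⟶ B)

theorem hopfQ_mul : (hopfQ f g).mul = mulQ f g := rfl
theorem hopfQ_one : (hopfQ f g).one = oneQ f g := rfl
theorem hopfQ_counit : (hopfQ f g).counit = counitQ f g := rfl
theorem hopfQ_comul : (hopfQ f g).comul = comulQ f g := rfl
theorem hopfQ_antipode : (hopfQ f g).antipode = SQ f g := rfl

/-- Q as a monoid object. -/
noncomputable instance QMonObj : MonObj (Qc f g) where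
  one := oneQ f g
  mul := mulQ f g
  one_mul := (hopfQ f g).one_mul
  mul_one := (hopfQ f g).mul_one
  mul_assoc := (hopfQ f g).mul_assoc

/-- Q as a comonoid object. -/
noncomputable instance QComonObj : ComonObj (Qc f g) where
  counit := counitQ f g
  comul := comulQ f g
  counit_comul := (hopfQ f g).counit_comul
  comul_counit := (hopfQ f g).comul_counit
  comul_assoc := (hopfQ f g).comul_assoc

/-- Q as a Hopf monoid object. -/
noncomputable instance QHopfObj : HopfObj (Qc f g) where
  toMonObj := QMonObj f g
  toComonObj := QComonObj f g
  mul_comul := (hopfQ f g).mul_comul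
  one_comul := by
    rw [MonObj.tensorObj.one_def]
    exact (hopfQ f g).one_comul
  mul_counit := by
    rw [Comon.tensorObj_counit]
    exact (hopfQ f g).mul_counit
  one_counit := (hopfQ f g).one_counit
  antipode := SQ f g
  antipode_left := (hopfQ f g).antipode_left
  antipode_right := (hopfQ f g).antipode_right

/-- Q as a Hopf monoid. -/
noncomputable abbrev QHopf : Hopf C := ⟨Qc f g⟩

noncomputable instance π0_isBimonHom : IsBimonHom (π0 f g) where
  one_hom := rfl
  mul_hom := (pi_mul f g).symm
  hom_counit := pi_counit f g
  hom_comul := pi_comul f g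

/-- The projection, as a morphism of Hopf monoids. -/
noncomputable def πH : B ⟶ QHopf f g := hopfHomMk (π0 f g)

theorem πH_hom : uhomH (πH f g) = π0 f g := rfl

theorem πH_fg : f ≫ πH f g = g ≫ πH f g := by
  apply hopf_ext
  have := pi_fg f g
  exact this

theorem descH (T : Hopf C) (t : B ⟶ T) (ht : f ≫ t = g ≫ t) :
    ∃! d : QHopf f g ⟶ T, πH f g ≫ d = t := by
  have htc : uhomH f ≫ uhomH t = uhomH g ≫ uhomH t := congrArg uhomH ht
  have hw : phiHopf f ≫ uhomH t = phiHopf g ≫ uhomH t :=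
    phi_coeq_of f g (hMul T) (uhomH t) (uhomH_mul t) htc
  have dfac : π0 f g ≫ coequalizer.desc (uhomH t) hw = uhomH t := coequalizer.π_desc _ _
  haveI := (isCoeq_π0 f g).epi
  haveI := epi_ππ f g
  have hd : IsBimonHom (coequalizer.desc (uhomH t) hw : (QHopf f g).X ⟶ T.X) :=
    { one_hom := by
        show oneQ f g ≫ _ = hOne T
        rw [oneQ_def, Category.assoc, dfac, uhomH_one]
      mul_hom := by
        show mulQ f g ≫ _ = _
        rw [← cancel_epi (π0 f g ⊗ₘ π0 f g), reassoc_of% (pi_mul f g), dfac,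
          uhomH_mul t, ← tensor_comp_assoc, dfac]
      hom_counit := by
        show coequalizer.desc (uhomH t) hw ≫ hCounit T = counitQ f g
        rw [← cancel_epi (π0 f g), reassoc_of% dfac, uhomH_counit t, pi_counit]
      hom_comul := by
        show coequalizer.desc (uhomH t) hw ≫ hComul T
            = comulQ f g ≫ (coequalizer.desc (uhomH t) hw ⊗ₘ coequalizer.desc (uhomH t) hw)
        rw [← cancel_epi (π0 f g), reassoc_of% dfac, uhomH_comul t,
          reassoc_of% (pi_comul f g), ← tensor_comp, dfac] }
  refine ⟨hopfHomMk _ (hh := hd), ?_, ?_⟩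
  · exact hopf_ext dfac
  · intro y hy
    apply hopf_ext
    show uhomH y = coequalizer.desc (uhomH t) hw
    have hy' : π0 f g ≫ uhomH y = uhomH t := congrArg uhomH hy
    rw [← cancel_epi (π0 f g), hy', dfac]

end Build3
section Build4
set_option linter.unusedSectionVars false
variable [BraidedCategory C] [HasCoequalizers C]
  [∀ X : C, PreservesColimitsOfShape WalkingParallelPair (tensorLeft X)]
  [∀ X : C, PreservesColimitsOfShape WalkingParallelPair (tensorRight X)]

theorem hopfStructOn_ext {Y : C} (s t : HopfStructOn Y) (hmul : s.mul = t.mul)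
    (hone : s.one = t.one) (hcounit : s.counit = t.counit) (hcomul : s.comul = t.comul)
    (hant : s.antipode = t.antipode) : s = t := by
  rcases s with ⟨⟨sc1, sc2, _, _, _⟩, sm, so, _, _, _, _, _, _, _, sa, _, _⟩
  rcases t with ⟨⟨tc1, tc2, _, _, _⟩, tm, tto, _, _, _, _, _, _, _, ta, _, _⟩
  dsimp only at hmul hone hcounit hcomul hant
  subst hmul hone hcounit hcomul hant
  rfl

variable {A B : Hopf C} (f g : A ⟶ B)

theorem antipode_uniq (a c : Qc f g ⟶ Qc f g)
    (ha : comulQ f g ≫ (a ▷ Qc f g) ≫ mulQ f g = counitQ f g ≫ oneQ f g)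
    (hc : comulQ f g ≫ (Qc f g ◁ c) ≫ mulQ f g = counitQ f g ≫ oneQ f g) : a = c := by
  let aC : Conv (Qc f g) (Qc f g) := a
  let iC : Conv (Qc f g) (Qc f g) := 𝟙 (Qc f g)
  let cC : Conv (Qc f g) (Qc f g) := c
  have h1 : aC * iC = 1 := by
    rw [Conv.mul_eq, Conv.one_eq]
    show comulQ f g ≫ a ▷ Qc f g ≫ Qc f g ◁ 𝟙 (Qc f g) ≫ mulQ f g = counitQ f g ≫ oneQ f g
    rw [MonoidalCategory.whiskerLeft_id, Category.id_comp]
    exact ha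
  have h2 : iC * cC = 1 := by
    rw [Conv.mul_eq, Conv.one_eq]
    show comulQ f g ≫ 𝟙 (Qc f g) ▷ Qc f g ≫ Qc f g ◁ c ≫ mulQ f g = counitQ f g ≫ oneQ f g
    rw [MonoidalCategory.id_whiskerRight, Category.id_comp]
    exact hc
  have hac : aC = cC := left_inv_eq_right_inv h1 h2
  exact hac

theorem cocomm_Q (hB : IsCocomm B) : IsCocomm (QHopf f g) := by
  show comulQ f g ≫ (β_ _ _).hom = comulQ f g
  haveI := (isCoeq_π0 f g).epi
  have hB' : hComul B ≫ (β_ (hCar B) (hCar B)).hom = hComul B := hB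
  rw [← cancel_epi (π0 f g), reassoc_of% (pi_comul f g), pi_comul,
    BraidedCategory.braiding_naturality, reassoc_of% hB']

theorem coforkH : Nonempty (IsColimit (Cofork.ofπ (πH f g) (πH_fg f g))) := by
  constructor
  refine Cofork.IsColimit.mk _ (fun s => (descH f g s.pt s.π s.condition).choose)
    (fun s => (descH f g s.pt s.π s.condition).choose_spec.1)
    (fun s m hm => (descH f g s.pt s.π s.condition).choose_spec.2 m ?_)
  simpa using hm

theorem uhomH_hzero (A B : Hopf C) : uhomH (hzero A B) = hCounit A ≫ hOne B := rfl

theorem phiHopf_hzero (A B : Hopf C) : phiHopf (hzero A B) = phiHopfEps A B := by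
  simp only [phiHopf, phiHopfEps, uhomH_hzero, MonoidalCategory.whiskerLeft_comp,
    comp_whiskerRight, Category.assoc]
  slice_lhs 2 3 => rw [← comp_whiskerRight, MonObj.mul_one]

end Build4

section BuildCoc
set_option linter.unusedSectionVars false
variable [BraidedCategory C] [HasCoequalizers C]
  [∀ X : C, PreservesColimitsOfShape WalkingParallelPair (tensorLeft X)]
  [∀ X : C, PreservesColimitsOfShape WalkingParallelPair (tensorRight X)]
variable {A B : HopfCoc C} (f g : A ⟶ B)

/-- The coequalizer as a cocommutative Hopf monoid. -/
noncomputable def Qcoc : HopfCoc C :=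
  ⟨QHopf (A := A.obj) (B := B.obj) f.hom g.hom, cocomm_Q f.hom g.hom B.property⟩

/-- The projection in `HopfCoc`. -/
noncomputable def πCoc : B ⟶ Qcoc f g :=
  InducedCategory.homMk (πH (A := A.obj) (B := B.obj) f.hom g.hom)

theorem πCoc_fg : f ≫ πCoc f g = g ≫ πCoc f g :=
  InducedCategory.hom_ext (πH_fg (A := A.obj) (B := B.obj) f.hom g.hom)

theorem coforkCoc : Nonempty (IsColimit (Cofork.ofπ (πCoc f g) (πCoc_fg f g))) := by
  constructor
  refine Cofork.IsColimit.mk _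
    (fun s => InducedCategory.homMk (descH (A := A.obj) (B := B.obj) f.hom g.hom s.pt.obj s.π.hom
      (congrArg InducedCategory.Hom.hom s.condition)).choose)
    (fun s => InducedCategory.hom_ext (descH (A := A.obj) (B := B.obj) f.hom g.hom s.pt.obj s.π.hom
      (congrArg InducedCategory.Hom.hom s.condition)).choose_spec.1)
    (fun s m hm => InducedCategory.hom_ext ((descH (A := A.obj) (B := B.obj) f.hom g.hom s.pt.obj
      s.π.hom (congrArg InducedCategory.Hom.hom s.condition)).choose_spec.2 m.hom ?_))
  exact congrArg InducedCategory.Hom.hom hm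

end BuildCoc

/-- **Statement 10.** In a braided monoidal category with equalizers and coequalizers
preserved by tensoring, the coequalizer of `f, g : A ⟶ B` in `Hopf(M)` is computed as the
coequalizer in `M` of `(φ_f, φ_g)`, which carries a unique Hopf monoid structure making the
projection a morphism of Hopf monoids; the same holds in `Hopf_coc(M)`; and the cokernel of
`f` is the coequalizer in `M` of `(φ_f, m_B(Id ⊗ ε_A ⊗ Id))`. -/
theorem hopf_coequalizers
    [BraidedCategory C] [HasEqualizers C] [HasCoequalizers C]
    [∀ X : C, PreservesLimitsOfShape WalkingParallelPair (tensorLeft X)]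
    [∀ X : C, PreservesLimitsOfShape WalkingParallelPair (tensorRight X)]
    [∀ X : C, PreservesColimitsOfShape WalkingParallelPair (tensorLeft X)]
    [∀ X : C, PreservesColimitsOfShape WalkingParallelPair (tensorRight X)] :
    (∀ (A B : Hopf C) (f g : A ⟶ B),
      (∃! s : HopfStructOn (coequalizer (phiHopf f) (phiHopf g)),
        (coequalizer.π (phiHopf f) (phiHopf g) ⊗ₘ coequalizer.π (phiHopf f) (phiHopf g)) ≫
            s.mul = hMul B ≫ coequalizer.π (phiHopf f) (phiHopf g) ∧
        hOne B ≫ coequalizer.π (phiHopf f) (phiHopf g) = s.one ∧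
        coequalizer.π (phiHopf f) (phiHopf g) ≫ s.counit = hCounit B ∧
        coequalizer.π (phiHopf f) (phiHopf g) ≫ s.comul =
          hComul B ≫
            (coequalizer.π (phiHopf f) (phiHopf g) ⊗ₘ coequalizer.π (phiHopf f) (phiHopf g))) ∧
      (∃ (Qh : Hopf C) (πh : B ⟶ Qh)
         (w : phiHopf f ≫ uhomH πh = phiHopf g ≫ uhomH πh) (w2 : f ≫ πh = g ≫ πh),
         Nonempty (IsColimit (Cofork.ofπ (uhomH πh) w)) ∧
         Nonempty (IsColimit (Cofork.ofπ πh w2)))) ∧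
    (∀ (A B : HopfCoc C) (f g : A ⟶ B),
      ∃ (Qh : HopfCoc C) (πh : B ⟶ Qh)
        (w : phiHopf (f.hom : A.obj ⟶ B.obj) ≫ uhom πh = phiHopf (g.hom : A.obj ⟶ B.obj) ≫ uhom πh)
        (w2 : f ≫ πh = g ≫ πh),
        Nonempty (IsColimit (Cofork.ofπ (uhom πh) w)) ∧
        Nonempty (IsColimit (Cofork.ofπ πh w2))) ∧
    (∀ (A B : Hopf C) (f : A ⟶ B),
      ∃ (Qh : Hopf C) (ch : B ⟶ Qh)
        (w : phiHopf f ≫ uhomH ch = phiHopfEps A B ≫ uhomH ch)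
        (w2 : f ≫ ch = hzero A B ≫ ch),
        Nonempty (IsColimit (Cofork.ofπ (uhomH ch) w)) ∧
        Nonempty (IsColimit (Cofork.ofπ ch w2))) := by
  refine ⟨fun A B f g => ⟨⟨hopfQ f g, ⟨pi_mul f g, rfl, pi_counit f g, pi_comul f g⟩, ?_⟩,
    QHopf f g, πH f g, wfg f g, πH_fg f g, ⟨coequalizerIsCoequalizer _ _⟩, coforkH f g⟩,
    fun A B f g => ⟨Qcoc f g, πCoc f g, wfg (A := A.obj) (B := B.obj) f.hom g.hom, πCoc_fg f g,
      ⟨coequalizerIsCoequalizer _ _⟩, coforkCoc f g⟩,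
    fun A B f => ?_⟩
  · rintro s ⟨h1, h2, h3, h4⟩
    haveI := (isCoeq_π0 f g).epi
    haveI := epi_ππ f g
    have hm : s.mul = mulQ f g := by rw [← cancel_epi (π0 f g ⊗ₘ π0 f g), h1, pi_mul]
    have ho : s.one = oneQ f g := h2.symm
    have hc : s.counit = counitQ f g := by rw [← cancel_epi (π0 f g), h3, pi_counit]
    have hcm : s.comul = comulQ f g := by rw [← cancel_epi (π0 f g), h4, pi_comul]
    refine hopfStructOn_ext s (hopfQ f g) hm ho hc hcm ?_
    refine antipode_uniq f g _ _ ?_ ?_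
    · have hs := s.antipode_left
      rw [hm, ho, hc, hcm] at hs
      exact hs
    · exact (hopfQ f g).antipode_right
  · rw [← phiHopf_hzero A B]
    exact ⟨QHopf f (hzero A B), πH f (hzero A B), wfg f (hzero A B), πH_fg f (hzero A B),
      ⟨coequalizerIsCoequalizer _ _⟩, coforkH f (hzero A B)⟩

end HopfSemiabelian
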